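/- Deterministic core of Theorem B.4 (convergence of noisy importance-weighted kernel ridge regression). Let H be a complex Hilbert space, let T and T̂ be positive bounded operators on H with ‖T‖_op ≤ 1, and let λ > 0. Set B := (T + λ·Id)^{-1/2}(T − T̂)(T + λ·Id)^{-1/2}. Suppose ‖B‖_op ≤ c for some c ∈ (0,1), and ‖(T + λ·Id)^{-1/2}(T − T̂)‖_op ≤ s for some s ≥ 0. Then for all g, h ∈ H, ‖T^{1/2}((T̂ + λ·Id)^{-1} T̂ g − h)‖ ≤ (1 − c)^{-1}·((s + 1)·‖g − h‖ + 2s·‖h‖) + √λ·‖h‖. (With g = I_BQ, h = I, T and T̂ the population- and sample-level weighted integral operators, and the norm ‖T^{1/2}·‖ equal to the L²(Θ, Q_w) norm, this yields the bound of Theorem B.4 on ‖I_CBQ − I‖_{L²(Θ, Q_w)}.) -/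

import Mathlib

local notation "⟪" x ", " y "⟫" => @inner ℂ _ _ x y

private lemma stmt8_sq_le {a b : ℝ} (ha : 0 ≤ a) (hb : 0 ≤ b) (hab : a ^ 2 ≤ b ^ 2) :
    a ≤ b := by nlinarith

set_option maxHeartbeats 1600000 in
/-- Deterministic core of Theorem B.4 (convergence of noisy importance-weighted kernel
ridge regression).  `T`, `T̂` are positive bounded operators with `‖T‖ ≤ 1`, `λ > 0`;
`S` is the inverse of `T + λ·Id` and `R` its positive square root, so `R = (T + λ·Id)^{-1/2}`;
`Shat` is the inverse of `T̂ + λ·Id`; `Rt` is the positive square root of `T`, i.e. `T^{1/2}`.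
With `B := R (T − T̂) R`, if `‖B‖ ≤ c` for some `c ∈ (0,1)` and
`‖(T + λ·Id)^{-1/2}(T − T̂)‖ ≤ s` with `s ≥ 0`, then for all `g h`,
`‖T^{1/2}((T̂ + λ·Id)⁻¹ T̂ g − h)‖ ≤ (1 − c)⁻¹ ((s + 1)‖g − h‖ + 2 s ‖h‖) + √λ ‖h‖`. -/
theorem stmt_8 {H : Type*} [NormedAddCommGroup H] [InnerProductSpace ℂ H] [CompleteSpace H]
    (T That S R Shat Rt : H →L[ℂ] H)
    (hT : T.IsPositive) (hThat : That.IsPositive) (hTnorm : ‖T‖ ≤ 1)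
    (lam : ℝ) (hlam : 0 < lam)
    (hS₁ : (T + (lam : ℂ) • (1 : H →L[ℂ] H)) * S = 1)
    (hS₂ : S * (T + (lam : ℂ) • (1 : H →L[ℂ] H)) = 1)
    (hR : R.IsPositive) (hRsq : R * R = S)
    (hShat₁ : (That + (lam : ℂ) • (1 : H →L[ℂ] H)) * Shat = 1)
    (hShat₂ : Shat * (That + (lam : ℂ) • (1 : H →L[ℂ] H)) = 1)
    (hRt : Rt.IsPositive) (hRtsq : Rt * Rt = T)
    (c : ℝ) (hc0 : 0 < c) (hc1 : c < 1) (hB : ‖R * (T - That) * R‖ ≤ c)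
    (s : ℝ) (hs : 0 ≤ s) (hS2bound : ‖R * (T - That)‖ ≤ s)
    (g h : H) :
    ‖Rt (Shat (That g) - h)‖ ≤
      (1 - c)⁻¹ * ((s + 1) * ‖g - h‖ + 2 * s * ‖h‖) + Real.sqrt lam * ‖h‖ := by
  set A : H →L[ℂ] H := T + (lam : ℂ) • (1 : H →L[ℂ] H) with hAdef
  set Ahat : H →L[ℂ] H := That + (lam : ℂ) • (1 : H →L[ℂ] H) with hAhatdef
  have hc' : (0:ℝ) < 1 - c := by linarith
  have hRsym : (R : H →ₗ[ℂ] H).IsSymmetric :=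
    ContinuousLinearMap.isSelfAdjoint_iff_isSymmetric.mp hR.isSelfAdjoint
  have hRtsym : (Rt : H →ₗ[ℂ] H).IsSymmetric :=
    ContinuousLinearMap.isSelfAdjoint_iff_isSymmetric.mp hRt.isSelfAdjoint
  -- basic pointwise operator identities
  have happ : ∀ (P Q : H →L[ℂ] H) (x : H), (P * Q) x = P (Q x) := fun _ _ _ => rfl
  have hRRapp : ∀ u, R (R u) = S u := fun u => by
    rw [← happ, hRsq]
  have hRtRtapp : ∀ u, Rt (Rt u) = T u := fun u => by
    rw [← happ, hRtsq]
  have hSAapp : ∀ u, S (A u) = u := fun u => by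
    rw [← happ, hS₂]; rfl
  have hASapp : ∀ u, A (S u) = u := fun u => by
    rw [← happ, hS₁]; rfl
  have hShatAhat : ∀ u, Shat (Ahat u) = u := fun u => by
    rw [← happ, hShat₂]; rfl
  have hAhatShat : ∀ u, Ahat (Shat u) = u := fun u => by
    rw [← happ, hShat₁]; rfl
  -- R commutes with A, and R * A * R = 1
  have hcomm : A * R = R * A := by
    have h1 : (A * R) * R = 1 := by rw [mul_assoc, hRsq, hS₁]
    have h2 : R * (R * A) = 1 := by rw [← mul_assoc, hRsq, hS₂]
    exact left_inv_eq_right_inv h1 h2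
  have hRARop : R * A * R = 1 := by
    rw [mul_assoc, hcomm, ← mul_assoc, hRsq, hS₂]
  have hRAR : ∀ z, R (A (R z)) = z := fun z => by
    calc R (A (R z)) = (R * A * R) z := rfl
      _ = z := by rw [hRARop]; rfl
  have hAapp : ∀ u, A u = T u + (lam : ℂ) • u := fun u => rfl
  have hAhatapp : ∀ u, Ahat u = That u + (lam : ℂ) • u := fun u => rfl
  -- key inner-product identity: re ⟪R z, T (R z)⟫ + lam * ‖R z‖ ^ 2 = ‖z‖ ^ 2
  have haux : ∀ z, RCLike.re ⟪R z, T (R z)⟫ + lam * ‖R z‖ ^ 2 = ‖z‖ ^ 2 := by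
    intro z
    have e1 : ⟪R z, A (R z)⟫ = ⟪z, z⟫ := by
      rw [hRsym.apply_clm, hRAR]
    have e2 : ⟪R z, A (R z)⟫ = ⟪R z, T (R z)⟫ + (lam : ℂ) * ⟪R z, R z⟫ := by
      rw [hAapp, inner_add_right, inner_smul_right]
    have e3 := congrArg RCLike.re (e2.symm.trans e1)
    have e4 : ((lam : ℂ) * ⟪R z, R z⟫) = lam • ⟪R z, R z⟫ := Complex.real_smul.symm
    rw [map_add, e4, RCLike.smul_re, inner_self_eq_norm_sq (𝕜 := ℂ),
      inner_self_eq_norm_sq (𝕜 := ℂ)] at e3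
    exact e3
  -- F4 : ‖Rt (R z)‖ ≤ ‖z‖
  have hF4 : ∀ z, ‖Rt (R z)‖ ≤ ‖z‖ := by
    intro z
    refine stmt8_sq_le (norm_nonneg _) (norm_nonneg _) ?_
    have e1 : (‖Rt (R z)‖ : ℝ) ^ 2 = RCLike.re ⟪R z, T (R z)⟫ := by
      rw [← inner_self_eq_norm_sq (𝕜 := ℂ), hRtsym.apply_clm, hRtRtapp]
    have := haux z
    nlinarith [sq_nonneg ‖R z‖, norm_nonneg (R z)]
  -- sqrt lam * ‖R x‖ ≤ ‖x‖
  have hRlam : ∀ x, Real.sqrt lam * ‖R x‖ ≤ ‖x‖ := by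
    intro x
    refine stmt8_sq_le (by positivity) (norm_nonneg _) ?_
    have h1 := haux x
    have h2 : 0 ≤ RCLike.re ⟪R x, T (R x)⟫ := hT.re_inner_nonneg_right (R x)
    have h3 : Real.sqrt lam ^ 2 = lam := Real.sq_sqrt hlam.le
    nlinarith [sq_nonneg ‖R x‖]
  -- ‖Rt z‖ ≤ ‖z‖
  have hRtle : ∀ z, ‖Rt z‖ ≤ ‖z‖ := by
    intro z
    refine stmt8_sq_le (norm_nonneg _) (norm_nonneg _) ?_
    have e1 : (‖Rt z‖ : ℝ) ^ 2 = RCLike.re ⟪z, T z⟫ := by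
      rw [← inner_self_eq_norm_sq (𝕜 := ℂ), hRtsym.apply_clm, hRtRtapp]
    have e2 : RCLike.re ⟪z, T z⟫ ≤ ‖z‖ * ‖T z‖ := re_inner_le_norm _ _
    have e3 : ‖T z‖ ≤ ‖T‖ * ‖z‖ := T.le_opNorm z
    have e4 : ‖T‖ * ‖z‖ ≤ 1 * ‖z‖ := by
      exact mul_le_mul_of_nonneg_right hTnorm (norm_nonneg _)
    nlinarith [norm_nonneg z, norm_nonneg (T z)]
  -- ‖R (Rt z)‖ ≤ ‖z‖ via adjoints
  have hRtR_op : ‖Rt * R‖ ≤ 1 :=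
    ContinuousLinearMap.opNorm_le_bound _ zero_le_one
      (fun z => by rw [happ, one_mul]; exact hF4 z)
  have hRRt_op : ‖R * Rt‖ ≤ 1 := by
    have hstar : star (Rt * R) = R * Rt := by
      rw [star_mul, hR.isSelfAdjoint.star_eq, hRt.isSelfAdjoint.star_eq]
    calc ‖R * Rt‖ = ‖star (Rt * R)‖ := by rw [hstar]
      _ = ‖Rt * R‖ := norm_star _
      _ ≤ 1 := hRtR_op
  have hRRtle : ∀ z, ‖R (Rt z)‖ ≤ ‖z‖ := by
    intro z
    calc ‖R (Rt z)‖ = ‖(R * Rt) z‖ := rfl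
      _ ≤ ‖R * Rt‖ * ‖z‖ := (R * Rt).le_opNorm z
      _ ≤ 1 * ‖z‖ := mul_le_mul_of_nonneg_right hRRt_op (norm_nonneg _)
      _ = ‖z‖ := one_mul _
  -- ‖R (T x)‖ ≤ ‖x‖
  have hRTle : ∀ x, ‖R (T x)‖ ≤ ‖x‖ := by
    intro x
    rw [← hRtRtapp]
    exact (hRRtle _).trans (hRtle _)
  -- lam * ‖Shat x‖ ≤ ‖x‖
  have hShatlam : ∀ x, lam * ‖Shat x‖ ≤ ‖x‖ := by
    intro x
    have e1 : ⟪Shat x, x⟫ = ⟪Shat x, That (Shat x)⟫ + (lam : ℂ) * ⟪Shat x, Shat x⟫ := by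
      have e0 : ⟪Shat x, Ahat (Shat x)⟫ =
          ⟪Shat x, That (Shat x)⟫ + (lam : ℂ) * ⟪Shat x, Shat x⟫ := by
        rw [hAhatapp, inner_add_right, inner_smul_right]
      rwa [hAhatShat] at e0
    have e2 := congrArg RCLike.re e1
    have e15 : ((lam : ℂ) * ⟪Shat x, Shat x⟫) = lam • ⟪Shat x, Shat x⟫ :=
      Complex.real_smul.symm
    rw [map_add, e15, RCLike.smul_re, inner_self_eq_norm_sq (𝕜 := ℂ)] at e2
    have e3 : RCLike.re ⟪Shat x, x⟫ ≤ ‖Shat x‖ * ‖x‖ := re_inner_le_norm _ _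
    have e4 : 0 ≤ RCLike.re ⟪Shat x, That (Shat x)⟫ := hThat.re_inner_nonneg_right _
    rcases eq_or_lt_of_le (norm_nonneg (Shat x)) with hz | hz
    · rw [← hz]; simp [norm_nonneg]
    · nlinarith
  -- the operator V and its norm bound
  set V : H →L[ℂ] H := A * R * Shat * R * A with hVdef
  have hVR : ∀ w, A (R (Shat w)) = V (R w) := by
    intro w
    rw [hVdef]
    simp only [ContinuousLinearMap.mul_apply]
    rw [hRAR]
  have hV1 : V * (R * Ahat * R) = 1 := by
    ext x
    rw [hVdef]
    simp only [ContinuousLinearMap.mul_apply, ContinuousLinearMap.one_apply]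
    rw [hRAR (Ahat (R x)), hShatAhat, hRRapp, hASapp]
  have hBAhat : R * Ahat * R = 1 - R * (T - That) * R := by
    have hsub : Ahat = A - (T - That) := by
      rw [hAdef, hAhatdef]; abel
    rw [hsub, mul_sub, sub_mul, hRARop]
  have hVeq : V = 1 + V * (R * (T - That) * R) := by
    have h0 := hV1
    rw [hBAhat, mul_sub, mul_one] at h0
    exact eq_add_of_sub_eq h0
  have hVnorm : ‖V‖ ≤ (1 - c)⁻¹ := by
    have h1 : ‖V‖ ≤ 1 + c * ‖V‖ := by
      calc ‖V‖ = ‖1 + V * (R * (T - That) * R)‖ := by rw [← hVeq]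
        _ ≤ ‖(1 : H →L[ℂ] H)‖ + ‖V * (R * (T - That) * R)‖ := norm_add_le _ _
        _ ≤ 1 + ‖V‖ * ‖R * (T - That) * R‖ := by
            gcongr
            · exact ContinuousLinearMap.norm_id_le
            · exact norm_mul_le _ _
        _ ≤ 1 + c * ‖V‖ := by
            rw [mul_comm c ‖V‖]
            gcongr
    rw [inv_eq_one_div, le_div_iff₀ hc']
    nlinarith
  -- decomposition
  have hdecomp : Shat (That g) - h =
      Shat (That (g - h)) + (lam : ℂ) • S ((That - T) (Shat h)) + -((lam : ℂ) • S h) := by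
    have k1 : Shat (That h) = h - (lam : ℂ) • Shat h := by
      have : That h = Ahat h - (lam : ℂ) • h := by rw [hAhatapp]; abel
      rw [this, map_sub, hShatAhat, map_smul]
    have k2 : S ((That - T) (Shat h)) = S h - Shat h := by
      have : (That - T) (Shat h) = Ahat (Shat h) - A (Shat h) := by
        have : (That : H →L[ℂ] H) - T = Ahat - A := by rw [hAdef, hAhatdef]; abel
        rw [this]; rfl
      rw [this, map_sub, hAhatShat, hSAapp]
    have k3 : Shat (That (g - h)) = Shat (That g) - Shat (That h) := by
      rw [map_sub, map_sub]
    rw [k2, k3, k1, smul_sub]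
    abel
  -- bounds for the three pieces
  have bound₁ : ‖Rt (Shat (That (g - h)))‖ ≤ (1 - c)⁻¹ * ((s + 1) * ‖g - h‖) := by
    set u := g - h
    have e1 : Shat (That u) = R (A (R (Shat (That u)))) := (hRAR _).symm
    have e2 : ‖Rt (Shat (That u))‖ ≤ ‖A (R (Shat (That u)))‖ := by
      conv_lhs => rw [e1]
      exact hF4 _
    have e3 : A (R (Shat (That u))) = V (R (That u)) := hVR _
    have e4 : ‖R (That u)‖ ≤ (s + 1) * ‖u‖ := by
      have : That u = T u - (T - That) u := by
        show That u = T u - (T u - That u); abel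
      rw [this, map_sub]
      calc ‖R (T u) - R ((T - That) u)‖ ≤ ‖R (T u)‖ + ‖R ((T - That) u)‖ := norm_sub_le _ _
        _ ≤ ‖u‖ + ‖R * (T - That)‖ * ‖u‖ := by
            gcongr
            · exact hRTle u
            · exact (R * (T - That)).le_opNorm u
        _ ≤ ‖u‖ + s * ‖u‖ := by gcongr
        _ = (s + 1) * ‖u‖ := by ring
    calc ‖Rt (Shat (That u))‖ ≤ ‖V (R (That u))‖ := by rw [← e3]; exact e2
      _ ≤ ‖V‖ * ‖R (That u)‖ := V.le_opNorm _
      _ ≤ (1 - c)⁻¹ * ((s + 1) * ‖u‖) := by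
          apply mul_le_mul hVnorm e4 (norm_nonneg _) (by positivity)
  have bound₂ : ‖Rt ((lam : ℂ) • S ((That - T) (Shat h)))‖ ≤ s * ‖h‖ := by
    rw [map_smul, norm_smul, Complex.norm_real, Real.norm_eq_abs, abs_of_pos hlam]
    have e1 : ‖Rt (S ((That - T) (Shat h)))‖ ≤ ‖R ((That - T) (Shat h))‖ := by
      rw [← hRRapp]
      exact hF4 _
    have e2 : ‖R ((That - T) (Shat h))‖ ≤ s * ‖Shat h‖ := by
      have : (That - T) (Shat h) = -((T - That) (Shat h)) := by
        show That (Shat h) - T (Shat h) = -(T (Shat h) - That (Shat h)); abel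
      rw [this, map_neg, norm_neg]
      calc ‖R ((T - That) (Shat h))‖ = ‖(R * (T - That)) (Shat h)‖ := rfl
        _ ≤ ‖R * (T - That)‖ * ‖Shat h‖ := (R * (T - That)).le_opNorm _
        _ ≤ s * ‖Shat h‖ := by gcongr
    calc lam * ‖Rt (S ((That - T) (Shat h)))‖ ≤ lam * (s * ‖Shat h‖) := by
          exact mul_le_mul_of_nonneg_left (e1.trans e2) hlam.le
      _ = s * (lam * ‖Shat h‖) := by ring
      _ ≤ s * ‖h‖ := mul_le_mul_of_nonneg_left (hShatlam h) hs
  have bound₃ : ‖Rt (-((lam : ℂ) • S h))‖ ≤ Real.sqrt lam * ‖h‖ := by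
    rw [map_neg, norm_neg, map_smul, norm_smul, Complex.norm_real, Real.norm_eq_abs, abs_of_pos hlam]
    have e1 : ‖Rt (S h)‖ ≤ ‖R h‖ := by rw [← hRRapp]; exact hF4 _
    calc lam * ‖Rt (S h)‖ ≤ lam * ‖R h‖ := mul_le_mul_of_nonneg_left e1 hlam.le
      _ = Real.sqrt lam * (Real.sqrt lam * ‖R h‖) := by
          rw [← mul_assoc, Real.mul_self_sqrt hlam.le]
      _ ≤ Real.sqrt lam * ‖h‖ := by
          exact mul_le_mul_of_nonneg_left (hRlam h) (Real.sqrt_nonneg _)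
  -- put everything together
  have hsum : ‖Rt (Shat (That g) - h)‖ ≤
      ‖Rt (Shat (That (g - h)))‖ + ‖Rt ((lam : ℂ) • S ((That - T) (Shat h)))‖ +
        ‖Rt (-((lam : ℂ) • S h))‖ := by
    rw [hdecomp, map_add, map_add]
    exact norm_add₃_le
  have hinv1 : (1:ℝ) ≤ (1 - c)⁻¹ := by
    rw [inv_eq_one_div, le_div_iff₀ hc']; linarith
  calc ‖Rt (Shat (That g) - h)‖ ≤
      (1 - c)⁻¹ * ((s + 1) * ‖g - h‖) + s * ‖h‖ + Real.sqrt lam * ‖h‖ := by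
        refine hsum.trans ?_
        exact add_le_add (add_le_add bound₁ bound₂) bound₃
    _ ≤ (1 - c)⁻¹ * ((s + 1) * ‖g - h‖ + 2 * s * ‖h‖) + Real.sqrt lam * ‖h‖ := by
        have h2 : s * ‖h‖ ≤ (1 - c)⁻¹ * (2 * s * ‖h‖) := by
          have h3 : (1:ℝ) * (2 * s * ‖h‖) ≤ (1 - c)⁻¹ * (2 * s * ‖h‖) :=
            mul_le_mul_of_nonneg_right hinv1 (by positivity)
          nlinarith [mul_nonneg hs (norm_nonneg h)]
        rw [mul_add]
        linarith
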